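/- Let d ≥ 1, L > 0, μ > 0, and let f : ℝ^d → ℝ be L-smooth (differentiable with ‖∇f(x) − ∇f(y)‖ ≤ L‖x − y‖ for all x, y) and μ-strongly convex ((μ/2)‖x − y‖² ≤ f(x) − f(y) − ⟨∇f(y), x − y⟩ for all x, y). Let (Ω, F, P) be a probability space, let ĝ : Ω → ℝ^d be a square-integrable random vector, let γ > 0, let x_g ∈ ℝ^d, and set x⁺ := x_g − γ·ĝ (a random point). Then for every u ∈ ℝ^d: E[f(x⁺)] ≤ f(u) − ⟨∇f(x_g), u − x_g⟩ − (μ/2)‖u − x_g‖² − (γ/2)‖∇f(x_g)‖² + (γ/2)‖E[ĝ] − ∇f(x_g)‖² + (L·γ²/2)·E[‖ĝ‖²]. -/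

import Mathlib

open MeasureTheory RealInnerProductSpace

lemma descent_lemma {d : ℕ} {L : ℝ} (hL : 0 < L)
    (f : EuclideanSpace ℝ (Fin d) → ℝ) (hdiff : Differentiable ℝ f)
    (hsmooth : ∀ x y : EuclideanSpace ℝ (Fin d),
      ‖gradient f x - gradient f y‖ ≤ L * ‖x - y‖)
    (x y : EuclideanSpace ℝ (Fin d)) :
    f x ≤ f y + ⟪gradient f y, x - y⟫ + L / 2 * ‖x - y‖ ^ 2 := by
  set v := x - y with hv
  -- continuity of gradient
  have hgc : Continuous (gradient f) := by
    have : LipschitzWith (Real.toNNReal L) (gradient f) := by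
      apply LipschitzWith.of_dist_le_mul
      intro a b
      rw [dist_eq_norm, dist_eq_norm]
      simpa [Real.coe_toNNReal _ hL.le] using hsmooth a b
    exact this.continuous
  have key : ∀ t : ℝ, HasDerivAt (fun s : ℝ => f (y + s • v))
      (⟪gradient f (y + t • v), v⟫) t := by
    intro t
    have hc : HasDerivAt (fun s : ℝ => y + s • v) v t := by
      simpa using ((hasDerivAt_id t).smul_const v).const_add y
    have hf := (hdiff (y + t • v)).hasGradientAt.hasFDerivAt
    have := hf.comp_hasDerivAt t hc
    exact this
  have hcont : Continuous (fun t : ℝ => ⟪gradient f (y + t • v), v⟫) := by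
    exact (hgc.comp (by continuity)).inner continuous_const
  have heq : f x - f y = ∫ t in (0:ℝ)..1, ⟪gradient f (y + t • v), v⟫ := by
    have := intervalIntegral.integral_eq_sub_of_hasDerivAt
      (f := fun s : ℝ => f (y + s • v)) (a := (0:ℝ)) (b := 1)
      (fun t _ => key t) (hcont.intervalIntegrable 0 1)
    simp only [one_smul, zero_smul, add_zero] at this
    have hx : y + v = x := by rw [hv]; abel
    rw [this, hx]
  have hbound : ∫ t in (0:ℝ)..1, ⟪gradient f (y + t • v), v⟫ ≤
      ⟪gradient f y, v⟫ + L / 2 * ‖v‖ ^ 2 := by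
    have h1 : ∫ t in (0:ℝ)..1, ⟪gradient f (y + t • v), v⟫ ≤
        ∫ t in (0:ℝ)..1, (⟪gradient f y, v⟫ + L * t * ‖v‖ ^ 2) := by
      apply intervalIntegral.integral_mono_on (by norm_num)
        (hcont.intervalIntegrable 0 1)
        ((by fun_prop : Continuous fun t : ℝ =>
          (⟪gradient f y, v⟫ : ℝ) + L * t * ‖v‖ ^ 2).intervalIntegrable 0 1)
      intro t ht
      have : ⟪gradient f (y + t • v) - gradient f y, v⟫ ≤ L * t * ‖v‖ ^ 2 := by
        calc ⟪gradient f (y + t • v) - gradient f y, v⟫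
            ≤ ‖gradient f (y + t • v) - gradient f y‖ * ‖v‖ := real_inner_le_norm _ _
          _ ≤ (L * ‖(y + t • v) - y‖) * ‖v‖ := by
              apply mul_le_mul_of_nonneg_right (hsmooth _ _) (norm_nonneg _)
          _ = L * t * ‖v‖ ^ 2 := by
              rw [add_sub_cancel_left, norm_smul, Real.norm_eq_abs,
                abs_of_nonneg ht.1]; ring
      rw [inner_sub_left] at this
      linarith
    have h2 : ∫ t in (0:ℝ)..1, (⟪gradient f y, v⟫ + L * t * ‖v‖ ^ 2) =
        ⟪gradient f y, v⟫ + L / 2 * ‖v‖ ^ 2 := by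
      rw [intervalIntegral.integral_add
        (continuous_const.intervalIntegrable 0 1)
        ((by fun_prop : Continuous fun t : ℝ =>
          L * t * ‖v‖ ^ 2).intervalIntegrable 0 1)]
      simp only [intervalIntegral.integral_const, smul_eq_mul]
      have : ∫ t in (0:ℝ)..1, L * t * ‖v‖ ^ 2 = L / 2 * ‖v‖ ^ 2 := by
        have : (fun t : ℝ => L * t * ‖v‖ ^ 2) = fun t : ℝ => (L * ‖v‖ ^ 2) * t := by
          funext t; ring
        rw [this, intervalIntegral.integral_const_mul, integral_id]
        ring
      rw [this]; ring
    linarith [h1, h2.le, h2.ge]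
  linarith [heq, hbound]

set_option maxHeartbeats 1000000 in
theorem one_step_descent {d : ℕ} (hd : 1 ≤ d) (L μ : ℝ) (hL : 0 < L) (hμ : 0 < μ)
    (f : EuclideanSpace ℝ (Fin d) → ℝ)
    (hdiff : Differentiable ℝ f)
    (hsmooth : ∀ x y : EuclideanSpace ℝ (Fin d),
      ‖gradient f x - gradient f y‖ ≤ L * ‖x - y‖)
    (hsc : ∀ x y : EuclideanSpace ℝ (Fin d),
      μ / 2 * ‖x - y‖ ^ 2 ≤ f x - f y - ⟪gradient f y, x - y⟫)
    {Ω : Type*} [MeasurableSpace Ω] (P : Measure Ω) [IsProbabilityMeasure P]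
    (g : Ω → EuclideanSpace ℝ (Fin d)) (hg : MemLp g 2 P)
    (γ : ℝ) (hγ : 0 < γ) (xg : EuclideanSpace ℝ (Fin d))
    (u : EuclideanSpace ℝ (Fin d)) :
    ∫ ω, f (xg - γ • g ω) ∂P ≤
      f u - ⟪gradient f xg, u - xg⟫ - μ / 2 * ‖u - xg‖ ^ 2 -
        γ / 2 * ‖gradient f xg‖ ^ 2 +
        γ / 2 * ‖(∫ ω, g ω ∂P) - gradient f xg‖ ^ 2 +
        L * γ ^ 2 / 2 * ∫ ω, ‖g ω‖ ^ 2 ∂P := by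
  set a := gradient f xg with ha
  have hgi : Integrable g P := hg.integrable one_le_two
  have hsq : Integrable (fun ω => ‖g ω‖ ^ 2) P := hg.norm.integrable_sq
  have hinner : Integrable (fun ω => (⟪a, g ω⟫ : ℝ)) P := hgi.const_inner a
  -- pointwise bounds
  have hsub : ∀ ω, xg - γ • g ω - xg = -(γ • g ω) := fun ω => by abel
  have hup : ∀ ω, f (xg - γ • g ω) ≤
      f xg - γ * ⟪a, g ω⟫ + L * γ ^ 2 / 2 * ‖g ω‖ ^ 2 := by
    intro ω
    have := descent_lemma hL f hdiff hsmooth (xg - γ • g ω) xg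
    rw [hsub ω] at this
    rw [inner_neg_right, inner_smul_right, norm_neg, norm_smul, Real.norm_eq_abs,
      abs_of_nonneg hγ.le, mul_pow] at this
    calc f (xg - γ • g ω) ≤ f xg + -(γ * ⟪a, g ω⟫) + L / 2 * (γ ^ 2 * ‖g ω‖ ^ 2) := this
      _ = f xg - γ * ⟪a, g ω⟫ + L * γ ^ 2 / 2 * ‖g ω‖ ^ 2 := by ring
  have hlow : ∀ ω, f xg - γ * ⟪a, g ω⟫ ≤ f (xg - γ • g ω) := by
    intro ω
    have := hsc (xg - γ • g ω) xg
    rw [hsub ω, inner_neg_right, inner_smul_right] at this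
    nlinarith [sq_nonneg ‖xg - γ • g ω - xg‖, mul_nonneg (mul_nonneg hμ.le (by norm_num : (0:ℝ) ≤ 1/2)) (sq_nonneg ‖xg - γ • g ω - xg‖)]
  -- integrability of f (x⁺)
  have hfm : AEStronglyMeasurable (fun ω => f (xg - γ • g ω)) P := by
    exact hdiff.continuous.comp_aestronglyMeasurable
      (aestronglyMeasurable_const.sub (hg.aestronglyMeasurable.const_smul γ))
  have hfint : Integrable (fun ω => f (xg - γ • g ω)) P := by
    apply Integrable.mono'
      (g := fun ω => |f xg| + γ * ‖a‖ * ‖g ω‖ + L * γ ^ 2 / 2 * ‖g ω‖ ^ 2)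
      ((integrable_const _).add ((hgi.norm.const_mul _))
        |>.add (hsq.const_mul _)) hfm
    refine ae_of_all _ fun ω => ?_
    have h1 := hup ω
    have h2 := hlow ω
    have h3 : |(⟪a, g ω⟫ : ℝ)| ≤ ‖a‖ * ‖g ω‖ := abs_real_inner_le_norm a (g ω)
    rw [Real.norm_eq_abs, abs_le]
    constructor
    · nlinarith [abs_nonneg (f xg), neg_abs_le (f xg), le_abs_self (f xg),
        abs_le.1 h3, sq_nonneg ‖g ω‖]
    · nlinarith [le_abs_self (f xg), abs_le.1 h3, sq_nonneg ‖g ω‖]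
  -- integrate the upper bound
  have hUint : Integrable
      (fun ω => f xg - γ * ⟪a, g ω⟫ + L * γ ^ 2 / 2 * ‖g ω‖ ^ 2) P :=
    ((integrable_const _).sub (hinner.const_mul γ)).add (hsq.const_mul _)
  have hmain : ∫ ω, f (xg - γ • g ω) ∂P ≤
      f xg - γ * ⟪a, ∫ ω, g ω ∂P⟫ + L * γ ^ 2 / 2 * ∫ ω, ‖g ω‖ ^ 2 ∂P := by
    calc ∫ ω, f (xg - γ • g ω) ∂P
        ≤ ∫ ω, (f xg - γ * ⟪a, g ω⟫ + L * γ ^ 2 / 2 * ‖g ω‖ ^ 2) ∂P :=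
          integral_mono hfint hUint hup
      _ = f xg - γ * ⟪a, ∫ ω, g ω ∂P⟫ + L * γ ^ 2 / 2 * ∫ ω, ‖g ω‖ ^ 2 ∂P := by
          rw [integral_add (μ := P)
              ((by exact (integrable_const _).sub (hinner.const_mul γ) :
                Integrable (fun ω => f xg - γ * (⟪a, g ω⟫ : ℝ)) P))
              (hsq.const_mul _),
            integral_sub (μ := P) (integrable_const _)
              ((by exact hinner.const_mul γ :
                Integrable (fun ω => γ * (⟪a, g ω⟫ : ℝ)) P)),
            integral_const, integral_const_mul, integral_const_mul,
            integral_inner hgi a]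
          simp
  -- strong convexity at u
  have hscu := hsc u xg
  -- algebraic step
  set Eg := ∫ ω, g ω ∂P
  have halg : - (γ * ⟪a, Eg⟫) ≤ - (γ / 2 * ‖a‖ ^ 2) + γ / 2 * ‖Eg - a‖ ^ 2 := by
    have hns : ‖Eg - a‖ ^ 2 = ‖Eg‖ ^ 2 - 2 * ⟪Eg, a⟫ + ‖a‖ ^ 2 := norm_sub_sq_real Eg a
    have hcomm : (⟪Eg, a⟫ : ℝ) = ⟪a, Eg⟫ := real_inner_comm a Eg
    nlinarith [sq_nonneg ‖Eg‖]
  have hsqnn : 0 ≤ ∫ ω, ‖g ω‖ ^ 2 ∂P := integral_nonneg fun ω => sq_nonneg _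
  nlinarith [hmain, hscu, halg]
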